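/- Let $I$ be a vector space over a field $k$ that is both an algebra (multiplication $(x,y)\mapsto xy$) and a coalgebra (comultiplication $\Delta_I$, not necessarily counital), satisfying for all $x,y\in I$: $\Delta_I(xy)=x\otimes y+y\otimes x+\sum y_1\otimes xy_2+\sum xy_1\otimes y_2+\sum x_1\otimes x_2y+\sum x_1y\otimes x_2+\sum x_1y_1\otimes x_2y_2$. Then $k\ltimes_d I=k\oplus I$ with multiplication $(\alpha,x)(\beta,y)=(\alpha\beta,\alpha y+\beta x+xy)$, comultiplication $\Delta(\alpha,x)=\alpha(1,0)\otimes(1,0)+(1,0)\otimes(0,x)+(0,x)\otimes(1,0)+\sum(0,x_1)\otimes(0,x_2)$, unit $(1,0)$, and counit $\varepsilon(\alpha,x)=\alpha$ is a bialgebra; moreover an element $(\alpha,x)$ is grouplike (i.e., $\Delta(\alpha,x)=(\alpha,x)\otimes(\alpha,x)$ and $\varepsilon(\alpha,x)=1$) if and only if $\alpha=1$ and $\Delta_I(x)=x\otimes x$. -/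

import Mathlib

open TensorProduct

/-- Coassociativity of a (not necessarily counital) comultiplication. -/
def Coassoc {k : Type*} [Field k] {V : Type*} [AddCommGroup V] [Module k V]
    (d : V →ₗ[k] V ⊗[k] V) : Prop :=
  (TensorProduct.assoc k V V V).toLinearMap ∘ₗ TensorProduct.map d LinearMap.id ∘ₗ d
    = TensorProduct.map LinearMap.id d ∘ₗ d

/-- The comultiplication of the counitization `k ⋉ P`:
`Δ(α,p) = α(1,0)⊗(1,0) + (1,0)⊗(0,p) + (0,p)⊗(1,0) + ∑(0,p₁)⊗(0,p₂)`. -/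
noncomputable def counitComul {k : Type*} [Field k] {P : Type*} [AddCommGroup P] [Module k P]
    (dP : P →ₗ[k] P ⊗[k] P) : (k × P) →ₗ[k] (k × P) ⊗[k] (k × P) :=
  LinearMap.toSpanSingleton k ((k × P) ⊗[k] (k × P))
      (((1 : k), (0 : P)) ⊗ₜ[k] ((1 : k), (0 : P))) ∘ₗ LinearMap.fst k k P
  + TensorProduct.mk k (k × P) (k × P) ((1 : k), (0 : P)) ∘ₗ
      LinearMap.inr k k P ∘ₗ LinearMap.snd k k P
  + (TensorProduct.mk k (k × P) (k × P)).flip ((1 : k), (0 : P)) ∘ₗ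
      LinearMap.inr k k P ∘ₗ LinearMap.snd k k P
  + TensorProduct.map (LinearMap.inr k k P) (LinearMap.inr k k P) ∘ₗ dP ∘ₗ LinearMap.snd k k P

/-- The multiplication of the unitization `k ⋉ I`, as a bilinear map. -/
def unitMulL {k : Type*} [Field k] {I : Type*} [AddCommGroup I] [Module k I]
    (mI : I →ₗ[k] I →ₗ[k] I) : (k × I) →ₗ[k] (k × I) →ₗ[k] k × I :=
  LinearMap.mk₂ k (fun p q => (p.1 * q.1, p.1 • q.2 + q.1 • p.2 + mI p.2 q.2))
    (by intro p p' q; simp [Prod.ext_iff, add_mul, add_smul, map_add, LinearMap.add_apply]; abel)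
    (by intro c p q
        refine Prod.ext (by simp [mul_assoc]) ?_
        simp only [Prod.smul_fst, Prod.smul_snd, smul_eq_mul, map_smul,
          LinearMap.smul_apply, smul_add, mul_smul, smul_comm q.1 c])
    (by intro p q q'; simp [Prod.ext_iff, mul_add, add_smul, map_add, smul_add]; abel)
    (by intro c p q
        refine Prod.ext (by simp; ring) ?_
        simp only [Prod.smul_fst, Prod.smul_snd, smul_eq_mul, map_smul,
          LinearMap.smul_apply, smul_add, mul_smul, smul_comm p.1 c])

/-- The induced multiplication on `A ⊗ A`: `(a ⊗ b)(c ⊗ d) = ac ⊗ bd`. -/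
noncomputable def tensorMul {k : Type*} [Field k] {A : Type*} [AddCommGroup A] [Module k A]
    (m : A →ₗ[k] A →ₗ[k] A) : (A ⊗[k] A) →ₗ[k] (A ⊗[k] A) →ₗ[k] A ⊗[k] A :=
  TensorProduct.homTensorHomMap (RingHom.id k) A A A A ∘ₗ TensorProduct.map m m

section Helper

variable {k : Type*} [Field k] {I : Type*} [AddCommGroup I] [Module k I]
  (mI : I →ₗ[k] I →ₗ[k] I) (dI : I →ₗ[k] I ⊗[k] I)

local notation "e" => (((1:k), (0:I)) : k × I)
local notation "ι" => LinearMap.inr k k I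

lemma unitMulL_apply (p q : k × I) :
    unitMulL mI p q = (p.1 * q.1, p.1 • q.2 + q.1 • p.2 + mI p.2 q.2) := rfl

lemma counitComul_apply (α : k) (x : I) :
    counitComul dI (α, x)
      = α • (e ⊗ₜ[k] e) + e ⊗ₜ[k] ι x + ι x ⊗ₜ[k] e
        + TensorProduct.map ι ι (dI x) := by
  simp [counitComul, LinearMap.toSpanSingleton_apply]

lemma tensorMul_tmul {A : Type*} [AddCommGroup A] [Module k A] (m : A →ₗ[k] A →ₗ[k] A)
    (a b : A) : tensorMul m (a ⊗ₜ[k] b) = TensorProduct.map (m a) (m b) := by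
  apply TensorProduct.ext'
  intro c d
  simp [tensorMul]

lemma unitMulL_e : unitMulL mI e = LinearMap.id := by
  apply LinearMap.ext; intro p; simp [unitMulL_apply]

lemma unitMulL_e_right (p : k × I) : unitMulL mI p e = p := by
  simp [unitMulL_apply]

lemma unitMulL_inr_inr (x y : I) : unitMulL mI (ι x) (ι y) = ι (mI x y) := by
  simp [unitMulL_apply]

lemma unitMulL_e_comp_inr : unitMulL mI e ∘ₗ ι = ι := by
  rw [unitMulL_e]; rfl

lemma unitMulL_inr_comp_inr (x : I) : unitMulL mI (ι x) ∘ₗ ι = ι ∘ₗ mI x := by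
  apply LinearMap.ext; intro y; simp [unitMulL_apply]

lemma unitMulL_inr_e (x : I) : unitMulL mI (ι x) e = ι x := by
  simp [unitMulL_apply]

end Helper
section Helper2

variable {k : Type*} [Field k] {I : Type*} [AddCommGroup I] [Module k I]
  (mI : I →ₗ[k] I →ₗ[k] I) (dI : I →ₗ[k] I ⊗[k] I)

local notation "e" => (((1:k), (0:I)) : k × I)
local notation "ι" => LinearMap.inr k k I

lemma map_map_arg {A B A' B' A'' B'' : Type*} [AddCommGroup A] [Module k A]
    [AddCommGroup B] [Module k B]
    [AddCommGroup A'] [Module k A'] [AddCommGroup B'] [Module k B']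
    [AddCommGroup A''] [Module k A''] [AddCommGroup B''] [Module k B'']
    (f : A' →ₗ[k] B') (g : A'' →ₗ[k] B'')
    (f' : A →ₗ[k] A') (g' : B →ₗ[k] A'') (t : A ⊗[k] B) :
    TensorProduct.map f g (TensorProduct.map f' g' t)
      = TensorProduct.map (f ∘ₗ f') (g ∘ₗ g') t :=
  (DFunLike.congr_fun (TensorProduct.map_comp f g f' g') t).symm

lemma tensorMul_tmul_mapinr (a b : k × I) (t : I ⊗[k] I) :
    tensorMul (unitMulL mI) (a ⊗ₜ[k] b) (TensorProduct.map ι ι t)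
      = TensorProduct.map (unitMulL mI a ∘ₗ ι) (unitMulL mI b ∘ₗ ι) t := by
  rw [tensorMul_tmul]
  exact map_map_arg _ _ _ _ t

lemma tensorMul_inr_inr (s : I ⊗[k] I) (a b : I) :
    tensorMul (unitMulL mI) (TensorProduct.map ι ι s) (ι a ⊗ₜ[k] ι b)
      = TensorProduct.map ι ι (tensorMul mI s (a ⊗ₜ[k] b)) := by
  induction s using TensorProduct.induction_on with
  | zero => simp
  | tmul x y =>
      simp only [TensorProduct.map_tmul, tensorMul_tmul, unitMulL_inr_inr]
  | add u v hu hv => simp only [map_add, LinearMap.add_apply, hu, hv]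

lemma tensorMul_inr_ee (s : I ⊗[k] I) :
    tensorMul (unitMulL mI) (TensorProduct.map ι ι s) (e ⊗ₜ[k] e)
      = TensorProduct.map ι ι s := by
  induction s using TensorProduct.induction_on with
  | zero => simp
  | tmul x y => simp only [TensorProduct.map_tmul, tensorMul_tmul, unitMulL_inr_e]
  | add u v hu hv => simp only [map_add, LinearMap.add_apply, hu, hv]

lemma tensorMul_inr_einr (s : I ⊗[k] I) (y : I) :
    tensorMul (unitMulL mI) (TensorProduct.map ι ι s) (e ⊗ₜ[k] ι y)
      = TensorProduct.map ι ι (TensorProduct.map LinearMap.id (mI.flip y) s) := by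
  induction s using TensorProduct.induction_on with
  | zero => simp
  | tmul a b =>
      simp only [TensorProduct.map_tmul, tensorMul_tmul, unitMulL_inr_e, unitMulL_inr_inr,
        LinearMap.id_apply, LinearMap.flip_apply]
  | add u v hu hv => simp only [map_add, LinearMap.add_apply, hu, hv]

lemma tensorMul_inr_inre (s : I ⊗[k] I) (y : I) :
    tensorMul (unitMulL mI) (TensorProduct.map ι ι s) (ι y ⊗ₜ[k] e)
      = TensorProduct.map ι ι (TensorProduct.map (mI.flip y) LinearMap.id s) := by
  induction s using TensorProduct.induction_on with
  | zero => simp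
  | tmul a b =>
      simp only [TensorProduct.map_tmul, tensorMul_tmul, unitMulL_inr_e, unitMulL_inr_inr,
        LinearMap.id_apply, LinearMap.flip_apply]
  | add u v hu hv => simp only [map_add, LinearMap.add_apply, hu, hv]

lemma tensorMul_inr_mapinr (s t : I ⊗[k] I) :
    tensorMul (unitMulL mI) (TensorProduct.map ι ι s) (TensorProduct.map ι ι t)
      = TensorProduct.map ι ι (tensorMul mI s t) := by
  induction s using TensorProduct.induction_on with
  | zero => simp
  | tmul a b =>
      rw [TensorProduct.map_tmul, tensorMul_tmul_mapinr, unitMulL_inr_comp_inr,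
        unitMulL_inr_comp_inr, tensorMul_tmul]
      exact (map_map_arg _ _ _ _ t).symm
  | add u v hu hv => simp only [map_add, LinearMap.add_apply, hu, hv]

end Helper2
section Helper3

variable {k : Type*} [Field k] {I : Type*} [AddCommGroup I] [Module k I]
  (mI : I →ₗ[k] I →ₗ[k] I) (dI : I →ₗ[k] I ⊗[k] I)

local notation "e" => (((1:k), (0:I)) : k × I)
local notation "ι" => LinearMap.inr k k I
local notation "σ" => LinearMap.snd k k I

lemma counitComul_e : counitComul dI e = e ⊗ₜ[k] e := by
  have h := counitComul_apply dI 1 (0 : I)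
  simpa [Prod.mk_zero_zero] using h

lemma counitComul_inr (x : I) :
    counitComul dI (ι x) = e ⊗ₜ[k] ι x + ι x ⊗ₜ[k] e + TensorProduct.map ι ι (dI x) := by
  have h := counitComul_apply dI 0 x
  simpa using h

lemma counitComul_comp_inr :
    counitComul dI ∘ₗ ι
      = TensorProduct.mk k (k × I) (k × I) e ∘ₗ ι
        + (TensorProduct.mk k (k × I) (k × I)).flip e ∘ₗ ι
        + TensorProduct.map ι ι ∘ₗ dI := by
  apply LinearMap.ext
  intro x
  simp only [LinearMap.comp_apply, LinearMap.add_apply, counitComul_inr]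
  rfl

lemma tensorMul_ee : tensorMul (unitMulL mI) (e ⊗ₜ[k] e) = LinearMap.id := by
  rw [tensorMul_tmul, unitMulL_e, TensorProduct.map_id]

lemma mapss_mapinr (t : I ⊗[k] I) :
    TensorProduct.map σ σ (TensorProduct.map ι ι t) = t := by
  rw [map_map_arg]
  simp [TensorProduct.map_id]

end Helper3
section Helper4

variable {k : Type*} [Field k] {I : Type*} [AddCommGroup I] [Module k I]
  (mI : I →ₗ[k] I →ₗ[k] I) (dI : I →ₗ[k] I ⊗[k] I)

local notation "e" => (((1:k), (0:I)) : k × I)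
local notation "ι" => LinearMap.inr k k I
local notation "σ" => LinearMap.snd k k I

lemma mul_assoc' (hIassoc : ∀ x y z : I, mI (mI x y) z = mI x (mI y z)) (p q w : k × I) :
    unitMulL mI (unitMulL mI p q) w = unitMulL mI p (unitMulL mI q w) := by
  simp only [unitMulL_apply]
  refine Prod.ext (by simp [mul_assoc]) ?_
  simp only [map_add, map_smul, LinearMap.add_apply, LinearMap.smul_apply, smul_add,
    mul_smul, hIassoc, smul_comm w.1 p.1]
  module

lemma counit_law (p : k × I) :
    (TensorProduct.lid k (k × I)) (TensorProduct.map (LinearMap.fst k k I) LinearMap.id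
      (counitComul dI p)) = p ∧
    (TensorProduct.rid k (k × I)) (TensorProduct.map LinearMap.id (LinearMap.fst k k I)
      (counitComul dI p)) = p := by
  obtain ⟨α, x⟩ := p
  rw [counitComul_apply]
  constructor
  · simp only [map_add, map_smul]
    rw [map_map_arg (LinearMap.fst k k I) LinearMap.id ι ι (dI x)]
    simp only [map_add, map_smul, TensorProduct.map_tmul, LinearMap.fst_apply,
      LinearMap.id_apply, LinearMap.fst_comp_inr, LinearMap.id_comp,
      TensorProduct.map_zero_left, LinearMap.zero_apply, TensorProduct.lid_tmul,
      map_zero, add_zero]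
    simp [Prod.ext_iff]
  · simp only [map_add, map_smul]
    rw [map_map_arg LinearMap.id (LinearMap.fst k k I) ι ι (dI x)]
    simp only [map_add, map_smul, TensorProduct.map_tmul, LinearMap.fst_apply,
      LinearMap.id_apply, LinearMap.fst_comp_inr, LinearMap.id_comp,
      TensorProduct.map_zero_right, LinearMap.zero_apply, TensorProduct.rid_tmul,
      map_zero, add_zero]
    simp [Prod.ext_iff]

lemma grouplike_iff (α : k) (x : I) :
    (counitComul dI (α, x) = ((α, x) : k × I) ⊗ₜ[k] ((α, x) : k × I) ∧
      ((α, x) : k × I).1 = 1)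
    ↔ (α = 1 ∧ dI x = x ⊗ₜ[k] x) := by
  constructor
  · rintro ⟨h, h1⟩
    refine ⟨h1, ?_⟩
    have h2 := congrArg (TensorProduct.map σ σ) h
    rw [counitComul_apply, map_add, mapss_mapinr] at h2
    simpa using h2
  · rintro ⟨h1, h2⟩
    subst h1
    refine ⟨?_, rfl⟩
    rw [counitComul_apply, h2]
    have he : ((1, x) : k × I) = e + ι x := by simp
    rw [he, TensorProduct.tmul_add, TensorProduct.add_tmul, TensorProduct.add_tmul,
      TensorProduct.map_tmul]
    simp only [LinearMap.inr_apply, one_smul]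
    abel

end Helper4
section Helper5

variable {k : Type*} [Field k] {I : Type*} [AddCommGroup I] [Module k I]
  (mI : I →ₗ[k] I →ₗ[k] I) (dI : I →ₗ[k] I ⊗[k] I)

local notation "e" => (((1:k), (0:I)) : k × I)
local notation "ι" => LinearMap.inr k k I

set_option synthInstance.maxHeartbeats 1000000

lemma asc_N1 (t : I ⊗[k] I) :
    (TensorProduct.assoc k (k × I) (k × I) (k × I))
      (TensorProduct.map (TensorProduct.mk k (k × I) (k × I) e ∘ₗ ι) ι t)
      = e ⊗ₜ[k] TensorProduct.map ι ι t := by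
  induction t using TensorProduct.induction_on with
  | zero => simp only [map_zero, TensorProduct.tmul_zero]
  | tmul a b =>
      simp only [TensorProduct.map_tmul, LinearMap.comp_apply, TensorProduct.mk_apply,
        TensorProduct.assoc_tmul]
  | add u v hu hv => simp only [map_add, TensorProduct.tmul_add, hu, hv]

set_option synthInstance.maxHeartbeats 1000000 in
lemma asc_N2 (t : I ⊗[k] I) :
    (TensorProduct.assoc k (k × I) (k × I) (k × I))
      (TensorProduct.map ((TensorProduct.mk k (k × I) (k × I)).flip e ∘ₗ ι) ι t)
      = TensorProduct.map ι (TensorProduct.mk k (k × I) (k × I) e ∘ₗ ι) t := by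
  induction t using TensorProduct.induction_on with
  | zero => simp only [map_zero]
  | tmul a b =>
      simp only [TensorProduct.map_tmul, LinearMap.comp_apply, TensorProduct.mk_apply,
        LinearMap.flip_apply, TensorProduct.assoc_tmul]
  | add u v hu hv => simp only [map_add, hu, hv]

lemma asc_N3 (t : I ⊗[k] I) :
    (TensorProduct.assoc k (k × I) (k × I) (k × I))
      (TensorProduct.map ι ι t ⊗ₜ[k] e)
      = TensorProduct.map ι ((TensorProduct.mk k (k × I) (k × I)).flip e ∘ₗ ι) t := by
  induction t using TensorProduct.induction_on with
  | zero => simp only [map_zero, TensorProduct.zero_tmul]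
  | tmul a b =>
      simp only [TensorProduct.map_tmul, LinearMap.comp_apply, TensorProduct.mk_apply,
        LinearMap.flip_apply, TensorProduct.assoc_tmul]
  | add u v hu hv => simp only [map_add, TensorProduct.add_tmul, hu, hv]

set_option maxHeartbeats 1000000 in
set_option synthInstance.maxHeartbeats 1000000 in
lemma coassoc' (hIco : Coassoc dI) : Coassoc (counitComul dI) := by
  have hco : ∀ x : I, (TensorProduct.assoc k I I I)
      (TensorProduct.map dI LinearMap.id (dI x)) = TensorProduct.map LinearMap.id dI (dI x) := by
    intro x
    have := DFunLike.congr_fun hIco x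
    simpa [LinearMap.comp_apply] using this
  apply LinearMap.ext
  rintro ⟨α, x⟩
  simp only [LinearMap.comp_apply, LinearEquiv.coe_coe]
  rw [counitComul_apply]
  simp only [map_add, map_smul]
  rw [map_map_arg (counitComul dI) LinearMap.id ι ι (dI x), LinearMap.id_comp,
    counitComul_comp_inr, TensorProduct.map_add_left, TensorProduct.map_add_left,
    map_map_arg LinearMap.id (counitComul dI) ι ι (dI x),
    counitComul_comp_inr, TensorProduct.map_add_right, TensorProduct.map_add_right]
  simp only [LinearMap.add_apply]
  rw [show TensorProduct.map (TensorProduct.map ι ι ∘ₗ dI) ι (dI x)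
        = TensorProduct.map (TensorProduct.map ι ι) ι
            (TensorProduct.map dI LinearMap.id (dI x)) by
      rw [map_map_arg, LinearMap.comp_id]]
  rw [show TensorProduct.map (LinearMap.id ∘ₗ ι) (TensorProduct.map ι ι ∘ₗ dI) (dI x)
        = TensorProduct.map ι (TensorProduct.map ι ι)
            (TensorProduct.map LinearMap.id dI (dI x)) by
      rw [map_map_arg, LinearMap.id_comp, LinearMap.comp_id]]
  simp only [map_add]
  rw [← TensorProduct.map_map_assoc ι ι ι (TensorProduct.map dI LinearMap.id (dI x)), hco]
  simp only [TensorProduct.map_tmul, LinearMap.id_apply,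
    counitComul_e, counitComul_inr, TensorProduct.add_tmul, TensorProduct.tmul_add,
    TensorProduct.assoc_tmul, asc_N1, asc_N2, asc_N3, map_add, LinearMap.id_comp]
  abel

end Helper5
section Helper6

variable {k : Type*} [Field k] {I : Type*} [AddCommGroup I] [Module k I]
  (mI : I →ₗ[k] I →ₗ[k] I) (dI : I →ₗ[k] I ⊗[k] I)

local notation "e" => (((1:k), (0:I)) : k × I)
local notation "ι" => LinearMap.inr k k I

set_option maxHeartbeats 2000000
set_option synthInstance.maxHeartbeats 1000000

lemma compat' (hcompat : ∀ x y : I,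
      dI (mI x y) = x ⊗ₜ[k] y + y ⊗ₜ[k] x
        + TensorProduct.map LinearMap.id (mI x) (dI y)
        + TensorProduct.map (mI x) LinearMap.id (dI y)
        + TensorProduct.map LinearMap.id (mI.flip y) (dI x)
        + TensorProduct.map (mI.flip y) LinearMap.id (dI x)
        + tensorMul mI (dI x) (dI y)) (p q : k × I) :
    counitComul dI (unitMulL mI p q)
      = tensorMul (unitMulL mI) (counitComul dI p) (counitComul dI q) := by
  obtain ⟨α, x⟩ := p
  obtain ⟨β, y⟩ := q
  rw [unitMulL_apply]
  simp only
  rw [counitComul_apply, counitComul_apply, counitComul_apply]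
  rw [show dI (α • y + β • x + mI x y) = α • dI y + β • dI x + dI (mI x y) by
    simp only [map_add, map_smul]]
  rw [hcompat]
  simp only [map_add, map_smul, LinearMap.add_apply, LinearMap.smul_apply,
    TensorProduct.tmul_add, TensorProduct.add_tmul, TensorProduct.tmul_smul,
    ← TensorProduct.smul_tmul']
  simp only [tensorMul_inr_ee, tensorMul_inr_einr, tensorMul_inr_inre, tensorMul_inr_mapinr,
    tensorMul_tmul_mapinr, tensorMul_tmul, TensorProduct.map_tmul,
    unitMulL_e_comp_inr, unitMulL_inr_comp_inr, unitMulL_e, unitMulL_inr_e, unitMulL_inr_inr,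
    LinearMap.id_apply, map_map_arg, LinearMap.id_comp, LinearMap.comp_id]
  module

end Helper6

theorem stmt19 {k : Type*} [Field k] {I : Type*} [AddCommGroup I] [Module k I]
    (mI : I →ₗ[k] I →ₗ[k] I) (dI : I →ₗ[k] I ⊗[k] I)
    -- `I` is an algebra and a coalgebra
    (hIassoc : ∀ x y z : I, mI (mI x y) z = mI x (mI y z))
    (hIco : Coassoc dI)
    -- the compatibility condition
    -- `Δ(xy) = x⊗y + y⊗x + ∑y₁⊗xy₂ + ∑xy₁⊗y₂ + ∑x₁⊗x₂y + ∑x₁y⊗x₂ + ∑x₁y₁⊗x₂y₂`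
    (hcompat : ∀ x y : I,
      dI (mI x y) = x ⊗ₜ[k] y + y ⊗ₜ[k] x
        + TensorProduct.map LinearMap.id (mI x) (dI y)
        + TensorProduct.map (mI x) LinearMap.id (dI y)
        + TensorProduct.map LinearMap.id (mI.flip y) (dI x)
        + TensorProduct.map (mI.flip y) LinearMap.id (dI x)
        + tensorMul mI (dI x) (dI y)) :
    -- then `k ⋉ I` is a bialgebra:
    -- the multiplication is associative, with identity `(1,0)`
    (∀ p q w : k × I,
      unitMulL mI (unitMulL mI p q) w = unitMulL mI p (unitMulL mI q w)) ∧
    (∀ p : k × I,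
      unitMulL mI ((1 : k), (0 : I)) p = p ∧ unitMulL mI p ((1 : k), (0 : I)) = p) ∧
    -- the comultiplication is coassociative, with counit `ε(α,x) = α`
    Coassoc (counitComul dI) ∧
    (∀ p : k × I,
      (TensorProduct.lid k (k × I)) (TensorProduct.map (LinearMap.fst k k I) LinearMap.id
        (counitComul dI p)) = p ∧
      (TensorProduct.rid k (k × I)) (TensorProduct.map LinearMap.id (LinearMap.fst k k I)
        (counitComul dI p)) = p) ∧
    -- the comultiplication and counit are algebra homomorphisms
    (∀ p q : k × I,
      counitComul dI (unitMulL mI p q)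
        = tensorMul (unitMulL mI) (counitComul dI p) (counitComul dI q)) ∧
    counitComul dI ((1 : k), (0 : I))
      = (((1 : k), (0 : I)) : k × I) ⊗ₜ[k] (((1 : k), (0 : I)) : k × I) ∧
    (∀ p q : k × I, (unitMulL mI p q).1 = p.1 * q.1) ∧
    ((((1 : k), (0 : I)) : k × I).1 = 1) ∧
    -- `(α, x)` is grouplike iff `α = 1` and `Δ_I(x) = x ⊗ x`
    (∀ (α : k) (x : I),
      (counitComul dI (α, x) = ((α, x) : k × I) ⊗ₜ[k] ((α, x) : k × I) ∧
        ((α, x) : k × I).1 = 1)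
      ↔ (α = 1 ∧ dI x = x ⊗ₜ[k] x)) := by
  refine ⟨mul_assoc' mI hIassoc, ?_, coassoc' dI hIco, counit_law dI, compat' mI dI hcompat,
    counitComul_e dI, fun p q => rfl, rfl, grouplike_iff dI⟩
  intro p
  constructor
  · have h := unitMulL_e mI
    rw [h]; rfl
  · exact unitMulL_e_right mI p
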